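/- A right strict binary search tree T is left full (every node has empty right subtree) if and only if its left-to-right postfix reading has the form 1^{k₁} 2^{k₂} ⋯ m^{k_m} (a weakly increasing word). Consequently, for each content there is exactly one left full binary search tree with that content. -/

import Mathlib

inductive BTree (α : Type*) where
  | leaf : BTree α
  | node : BTree α → α → BTree α → BTree α

variable {α : Type*}

/-- Insertion of a letter into a (right strict) binary search tree. -/
def BTree.insert [LinearOrder α] (a : α) : BTree α → BTree α
  | .leaf => .node .leaf a .leaf
  | .node l x r =>
      if a ≤ x then .node (BTree.insert a l) x r else .node l x (BTree.insert a r)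

/-- `bst w` inserts the letters of `w` from right to left into the empty tree. -/
def bst [LinearOrder α] (w : List α) : BTree α := w.foldr BTree.insert .leaf

/-- The list of labels of a tree. -/
def BTree.labels : BTree α → List α
  | .leaf => []
  | .node l x r => l.labels ++ [x] ++ r.labels

/-- Left-to-right postfix reading. -/
def BTree.lrp : BTree α → List α
  | .leaf => []
  | .node l x r => l.lrp ++ r.lrp ++ [x]

/-- A labelled binary tree is a right strict binary search tree if each
node's label is ≥ all labels in its left subtree and < all labels in its
right subtree. -/
def BTree.IsRightStrictBST [LinearOrder α] : BTree α → Prop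
  | .leaf => True
  | .node l x r =>
      (∀ y ∈ l.labels, y ≤ x) ∧ (∀ y ∈ r.labels, x < y) ∧
        l.IsRightStrictBST ∧ r.IsRightStrictBST

/-- A tree is left full if every node has an empty right subtree. -/
def BTree.LeftFull : BTree α → Prop
  | .leaf => True
  | .node l _ r => r = .leaf ∧ l.LeftFull

lemma BTree.mem_lrp_iff {a : α} {T : BTree α} : a ∈ T.lrp ↔ a ∈ T.labels := by
  induction T with
  | leaf => exact Iff.rfl
  | node l x r ihl ihr =>
    simp [BTree.lrp, BTree.labels, ihl, ihr]
    tauto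

lemma BTree.lrp_eq_labels : ∀ {T : BTree ℕ}, T.LeftFull → T.lrp = T.labels
  | .leaf, _ => rfl
  | .node l x r, ⟨hr, hl⟩ => by
    subst hr
    simp [BTree.lrp, BTree.labels, BTree.lrp_eq_labels hl]

lemma BTree.labels_sorted : ∀ {T : BTree ℕ}, T.IsRightStrictBST → T.LeftFull →
    T.labels.Pairwise (· ≤ ·)
  | .leaf, _, _ => List.Pairwise.nil
  | .node l x r, ⟨h1, _, hbl, _⟩, ⟨hr, hl⟩ => by
    subst hr
    simp only [BTree.labels, List.append_nil, List.pairwise_append]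
    exact ⟨BTree.labels_sorted hbl hl, List.pairwise_singleton _ x,
      fun a ha b hb => by simp at hb; subst hb; exact h1 a ha⟩

lemma BTree.leftFull_of_sorted : ∀ {T : BTree ℕ}, T.IsRightStrictBST →
    T.lrp.Pairwise (· ≤ ·) → T.LeftFull
  | .leaf, _, _ => trivial
  | .node l x r, ⟨h1, h2, hbl, hbr⟩, hs => by
    simp only [BTree.lrp, List.pairwise_append] at hs
    obtain ⟨⟨hsl, hsr, _⟩, _, hle⟩ := hs
    have hr : r = .leaf := by
      cases r with
      | leaf => rfl
      | node rl y rr =>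
        exfalso
        have hy : y ∈ (BTree.node rl y rr).labels := by simp [BTree.labels]
        have : y ≤ x := hle y (List.mem_append_right _ (BTree.mem_lrp_iff.2 hy)) x (by simp)
        exact absurd (h2 y hy) (not_lt.2 this)
    subst hr
    exact ⟨rfl, BTree.leftFull_of_sorted hbl hsl⟩

lemma BTree.eq_of_labels_eq : ∀ {T T' : BTree ℕ}, T.LeftFull → T'.LeftFull →
    T.labels = T'.labels → T = T'
  | .leaf, .leaf, _, _, _ => rfl
  | .leaf, .node l' x' r', _, _, h => by simp [BTree.labels] at h
  | .node l x r, .leaf, _, _, h => by simp [BTree.labels] at h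
  | .node l x r, .node l' x' r', ⟨hr, hl⟩, ⟨hr', hl'⟩, h => by
    subst hr; subst hr'
    simp only [BTree.labels, List.append_nil] at h
    obtain ⟨h1, h2⟩ := List.append_inj' h (by simp)
    simp at h2
    subst h2
    rw [BTree.eq_of_labels_eq hl hl' h1]

theorem leftFull_iff_lrp_sorted :
    (∀ T : BTree ℕ, T.IsRightStrictBST → (T.LeftFull ↔ T.lrp.Pairwise (· ≤ ·))) ∧
    (∀ T T' : BTree ℕ, T.IsRightStrictBST → T'.IsRightStrictBST →
      T.LeftFull → T'.LeftFull →
      (T.labels : Multiset ℕ) = (T'.labels : Multiset ℕ) → T = T') := by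
  constructor
  · intro T hb
    exact ⟨fun hf => (BTree.lrp_eq_labels hf) ▸ BTree.labels_sorted hb hf,
      BTree.leftFull_of_sorted hb⟩
  · intro T T' hb hb' hf hf' hm
    exact BTree.eq_of_labels_eq hf hf'
      (List.Perm.eq_of_pairwise'
        (BTree.labels_sorted hb hf) (BTree.labels_sorted hb' hf') (Quotient.exact hm))
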